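/- Let 𝒯 be a finite tree (a connected acyclic simple graph) with at least one edge. Then the line graph hypergraph of 𝒯 — the hypergraph on the edge set E(𝒯) whose hyperedges are all singletons {e}, e ∈ E(𝒯), together with all pairs {e,f} of distinct edges of 𝒯 sharing a common vertex — is a connected contextual hypergraph. (This is the hypergraph underlying the operahedron associated to 𝒯.) -/

import Mathlib

open scoped Classical

noncomputable section

/-! ## Hypergraphs (nestohedra combinatorics), after Curien–Laplante-Anfossi:
hypergraphs, restrictions, connectivity, saturation, reconnected restriction,
constructs/constructions, the face order, the flip rewriting, and terms over the
associated signatures. -/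

/-- A hypergraph on a finite vertex set: a finite set of nonempty hyperedges whose union is
the vertex set, assumed atomic (every singleton is a hyperedge). -/
structure CLHypergraph (α : Type*) [DecidableEq α] where
  verts : Finset α
  edges : Finset (Finset α)
  edges_nonempty : ∀ e ∈ edges, e.Nonempty
  edges_subset : ∀ e ∈ edges, e ⊆ verts
  atomic : ∀ v ∈ verts, {v} ∈ edges

namespace CLHypergraph

variable {α : Type*} [DecidableEq α]

/-- The plain restriction `𝓗_X` of a hypergraph to a subset `X` of its vertices. -/
def restrict (H : CLHypergraph α) (X : Finset α) : CLHypergraph α where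
  verts := X ∩ H.verts
  edges := H.edges.filter (· ⊆ X)
  edges_nonempty e he := H.edges_nonempty e (Finset.mem_filter.mp he).1
  edges_subset e he :=
    Finset.subset_inter (Finset.mem_filter.mp he).2 (H.edges_subset e (Finset.mem_filter.mp he).1)
  atomic v hv := by
    rcases Finset.mem_inter.mp hv with ⟨h1, h2⟩
    exact Finset.mem_filter.mpr ⟨H.atomic v h2, Finset.singleton_subset_iff.mpr h1⟩

/-- A hypergraph is connected if its vertex set is nonempty and admits no nontrivial
partition `X₁ ∪ X₂` such that every edge lies in `X₁` or in `X₂`. -/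
def Connected (H : CLHypergraph α) : Prop :=
  H.verts.Nonempty ∧ ∀ X₁ X₂ : Finset α, X₁.Nonempty → X₂.Nonempty →
    Disjoint X₁ X₂ → X₁ ∪ X₂ = H.verts → ∃ e ∈ H.edges, ¬e ⊆ X₁ ∧ ¬e ⊆ X₂

/-- `C` is (the vertex set of) a connected component of `H`: a maximal connected subset. -/
def IsComponent (H : CLHypergraph α) (C : Finset α) : Prop :=
  C ⊆ H.verts ∧ (H.restrict C).Connected ∧
    ∀ D : Finset α, C ⊆ D → D ⊆ H.verts → (H.restrict D).Connected → D = C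

/-- `y` and `z` lie in the same connected component of `H`. -/
def SameComponent (H : CLHypergraph α) (y z : α) : Prop :=
  ∃ C : Finset α, H.IsComponent C ∧ y ∈ C ∧ z ∈ C

/-- The saturation `Sat(𝓗)`: the set of (nonempty) connected subsets of vertices. -/
def sat (H : CLHypergraph α) : Finset (Finset α) :=
  H.verts.powerset.filter fun X => (H.restrict X).Connected

theorem singleton_connected (H : CLHypergraph α) {v : α} (hv : v ∈ H.verts) :
    (H.restrict {v}).Connected := by
  constructor
  · exact ⟨v, Finset.mem_inter.mpr ⟨Finset.mem_singleton_self v, hv⟩⟩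
  · intro X₁ X₂ h₁ h₂ hd hu
    exfalso
    have hv' : ({v} : Finset α) ∩ H.verts = {v} :=
      Finset.inter_eq_left.mpr (Finset.singleton_subset_iff.mpr hv)
    have hu' : X₁ ∪ X₂ = ({v} : Finset α) := hu.trans hv'
    have hX₁ : X₁ ⊆ {v} := hu' ▸ Finset.subset_union_left
    have hX₂ : X₂ ⊆ {v} := hu' ▸ Finset.subset_union_right
    obtain ⟨a, ha⟩ := h₁
    obtain ⟨b, hb⟩ := h₂
    have ha' := Finset.mem_singleton.mp (hX₁ ha)
    have hb' := Finset.mem_singleton.mp (hX₂ hb)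
    subst ha'; exact Finset.disjoint_left.mp hd ha (hb' ▸ hb)

/-- The reconnected restriction `𝓗 ↾ X` of `𝓗` to `X`. -/
def reconRestrict (H : CLHypergraph α) (X : Finset α) : CLHypergraph α where
  verts := X ∩ H.verts
  edges := (H.sat.image (· ∩ X)).filter (·.Nonempty)
  edges_nonempty e he := (Finset.mem_filter.mp he).2
  edges_subset := by
    intro e he
    rcases Finset.mem_image.mp (Finset.mem_filter.mp he).1 with ⟨Z, hZ, rfl⟩
    have hZv : Z ⊆ H.verts := Finset.mem_powerset.mp (Finset.mem_filter.mp hZ).1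
    exact fun a ha => Finset.mem_inter.mpr
      ⟨(Finset.mem_inter.mp ha).2, hZv (Finset.mem_inter.mp ha).1⟩
  atomic := by
    intro v hv
    rcases Finset.mem_inter.mp hv with ⟨h1, h2⟩
    refine Finset.mem_filter.mpr ⟨Finset.mem_image.mpr ⟨{v}, ?_, ?_⟩, ?_⟩
    · exact Finset.mem_filter.mpr
        ⟨Finset.mem_powerset.mpr (Finset.singleton_subset_iff.mpr h2),
         H.singleton_connected h2⟩
    · exact Finset.inter_eq_left.mpr (Finset.singleton_subset_iff.mpr h1)
    · exact ⟨v, by simp [Finset.inter_eq_left.mpr (Finset.singleton_subset_iff.mpr h1)]⟩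

/-- `x ⇝ {y,z}` in `𝓗`: after removing `x`, the vertices `y` and `z` lie in the same
connected component.  Its negation is "`x` disconnects `y` and `z` in `𝓗`". -/
def Links (H : CLHypergraph α) (x y z : α) : Prop :=
  (H.restrict (H.verts \ {x})).SameComponent y z

/-- A hypergraph is contextual if for every connected subset `Y` of cardinality at least 3
and all distinct `x, y, z ∈ Y`, `x` disconnects `y` and `z` in `𝓗_Y` iff it does in `𝓗`. -/
def Contextual (H : CLHypergraph α) : Prop :=
  ∀ Y : Finset α, Y ⊆ H.verts → (H.restrict Y).Connected → 3 ≤ Y.card →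
    ∀ x y z : α, x ∈ Y → y ∈ Y → z ∈ Y → x ≠ y → y ≠ z → x ≠ z →
      ((H.restrict Y).Links x y z ↔ H.Links x y z)

end CLHypergraph

/-- Finite rooted trees with nodes decorated by finite sets (potential constructs). -/
inductive FTree (α : Type*) : Type _ where
  | node : Finset α → List (FTree α) → FTree α

namespace FTree

variable {α : Type*} [DecidableEq α]

/-- The decoration of the root node. -/
def label : FTree α → Finset α
  | node Y _ => Y

/-- The list of children of the root node. -/
def children : FTree α → List (FTree α)
  | node _ ts => ts

/-- The support of a tree: the union of the decorations of its nodes. -/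
def support : FTree α → Finset α
  | node Y [] => Y
  | node Y (t :: ts) => support t ∪ support (node Y ts)

/-- The list of decorations of the nodes of a tree. -/
def labels : FTree α → List (Finset α)
  | node Y [] => [Y]
  | node Y (t :: ts) => labels t ++ labels (node Y ts)

/-- The dimension of a construct: the sum over its nodes `X` of `|X| - 1`. -/
def dim (T : FTree α) : ℕ := (T.labels.map fun X => X.card - 1).sum

mutual
  /-- The (full) subtree rooted at the node decorated by `X`, if any. -/
  def subtreeAt : FTree α → Finset α → Option (FTree α)
    | node Y ts, X => if Y = X then some (node Y ts) else subtreeAtList ts X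
  def subtreeAtList : List (FTree α) → Finset α → Option (FTree α)
    | [], _ => none
    | t :: ts, X => (subtreeAt t X).elim (subtreeAtList ts X) some
end

/-- The support `supp (T ↾ X)` of the subtree rooted at the node decorated by `X`
(or `∅` if there is no such node). -/
def suppAt (T : FTree α) (X : Finset α) : Finset α :=
  ((T.subtreeAt X).map support).getD ∅

mutual
  /-- The list of supports of the subtrees rooted at the nodes of `T` (its nested set). -/
  def nests : FTree α → List (Finset α)
    | node Y ts => support (node Y ts) :: nestsList ts
  def nestsList : List (FTree α) → List (Finset α)
    | [] => []
    | t :: ts => nests t ++ nestsList ts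
end

/-- The nested set of a tree, as a finite set. -/
def nestSet (T : FTree α) : Finset (Finset α) := T.nests.toFinset

/-- `S ≺ T` (`S` is covered by `T`) in the face order: `T` is obtained from `S` by
contracting one edge between a node and its father (equivalently, the nested set of `T`
is obtained from that of `S` by removing one non-root element). -/
def CoveredBy (S T : FTree α) : Prop :=
  ∃ N ∈ S.nests, N ≠ S.support ∧ T.nestSet = S.nestSet.erase N

/-- The face (subface) order `S ≼ T` on constructs: the reflexive–transitive closure of
the covering relation `≺`. -/
def FaceLe (S T : FTree α) : Prop := Relation.ReflTransGen CoveredBy S T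

/-- `IsSubtree S T`: `S` is a (full) subtree of `T`. -/
inductive IsSubtree : FTree α → FTree α → Prop
  | refl (t : FTree α) : IsSubtree t t
  | child {s t u : FTree α} : IsSubtree s t → t ∈ u.children → IsSubtree s u

/-- In `T`, the node decorated by `X` has a child decorated by `Y`. -/
def ParentChild (X Y : Finset α) (T : FTree α) : Prop :=
  ∃ R : FTree α, IsSubtree R T ∧ R.label = X ∧ ∃ t ∈ R.children, t.label = Y

mutual
  /-- Pruning: remove all (subtrees rooted at) nodes whose decoration is not a subset
  of `X`, keeping the root. -/
  def prune (X : Finset α) : FTree α → FTree α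
    | node Y ts => node Y (pruneList X ts)
  def pruneList (X : Finset α) : List (FTree α) → List (FTree α)
    | [] => []
    | t :: ts => if t.label ⊆ X then prune X t :: pruneList X ts else pruneList X ts
end

end FTree

/-- `IsConstruct H T`: the tree `T` is a construct of the hypergraph `H`: its root `Y` is a
nonempty subset of the vertices, its children are constructs of the connected components of
`𝓗 ∖ Y` (one for each component, listed by increasing maximal vertex). -/
inductive IsConstruct {α : Type*} [LinearOrder α] : CLHypergraph α → FTree α → Prop
  | node {H : CLHypergraph α} (Y : Finset α) (ts : List (FTree α))
      (hY : Y.Nonempty) (hYsub : Y ⊆ H.verts)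
      (hmem : ∀ t ∈ ts, (H.restrict (H.verts \ Y)).IsComponent t.support)
      (hcover : ∀ C : Finset α, (H.restrict (H.verts \ Y)).IsComponent C →
        ∃ t ∈ ts, t.support = C)
      (hsorted : ts.Pairwise fun a b => a.support.max < b.support.max)
      (hchild : ∀ t ∈ ts, IsConstruct (H.restrict t.support) t) :
      IsConstruct H (FTree.node Y ts)

section ConstructionOrder

variable {α : Type*} [LinearOrder α]

/-- A construction: a construct all of whose nodes are singletons (a vertex of the
nestohedron). -/
def IsConstruction (H : CLHypergraph α) (T : FTree α) : Prop :=
  IsConstruct H T ∧ ∀ X ∈ T.labels, X.card = 1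

/-- An `X`-face: a 2-dimensional construct whose unique non-singleton node is decorated
by `X`, of cardinality 3. -/
def IsXFace (H : CLHypergraph α) (X : Finset α) (T : FTree α) : Prop :=
  IsConstruct H T ∧ X.card = 3 ∧ X ∈ T.labels ∧ ∀ Y ∈ T.labels, Y ≠ X → Y.card = 1

/-- Two distinct constructions are joined by an edge of the nestohedron: both are covered
by a common 1-dimensional construct. -/
def EdgeJoined (H : CLHypergraph α) (S T : FTree α) : Prop :=
  IsConstruction H S ∧ IsConstruction H T ∧ S ≠ T ∧
  ∃ V : FTree α, IsConstruct H V ∧ V.dim = 1 ∧ FTree.CoveredBy S V ∧ FTree.CoveredBy T V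

/-- The flip rewriting relation `S → T` on constructions of an ordered hypergraph:
`S` and `T` are the two endpoints of an edge whose 1-dimensional face has unique
non-singleton node `{x, y}` with `x < y`, and in `S` the node `{x}` is the parent of the
node `{y}`. -/
def Flip (H : CLHypergraph α) (S T : FTree α) : Prop :=
  IsConstruction H S ∧ IsConstruction H T ∧ S ≠ T ∧
  ∃ (V : FTree α) (x y : α), IsConstruct H V ∧ V.dim = 1 ∧ x ≠ y ∧
    ({x, y} : Finset α) ∈ V.labels ∧ FTree.CoveredBy S V ∧ FTree.CoveredBy T V ∧
    FTree.ParentChild ({x} : Finset α) ({y} : Finset α) S ∧ x < y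

/-- The coordinate vector of a construction `S` of `H`:
`v^S_x = |{e ∈ Sat(𝓗) : x ∈ e ⊆ supp (S ↾ x)}|`. -/
def coordVec (H : CLHypergraph α) (S : FTree α) (x : α) : ℕ :=
  (H.sat.filter fun e => x ∈ e ∧ e ⊆ S.suppAt {x}).card

end ConstructionOrder

/-- Raw terms over the signature `Σ_𝓗` (and `Σ^c_𝓗`): variables are (connected) subsets,
function symbols are pairs `(X, Y)` of subsets, applied to a list of arguments. -/
inductive HTerm (α : Type*) : Type _ where
  | var : Finset α → HTerm α
  | app : Finset α → Finset α → List (HTerm α) → HTerm α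

namespace HTerm

variable {α : Type*} [DecidableEq α]

/-- The (output) sort of a term. -/
def sortOf : HTerm α → Finset α
  | var A => A
  | app _ Y _ => Y

/-- The list of variables occurring in a term. -/
def varsList : HTerm α → List (Finset α)
  | var A => [A]
  | app _ _ [] => []
  | app X Y (t :: ts) => varsList t ++ varsList (app X Y ts)

/-- The list of first components of the function symbols occurring in a term. -/
def appFirsts : HTerm α → List (Finset α)
  | var _ => []
  | app X _ [] => [X]
  | app X Y (t :: ts) => appFirsts t ++ appFirsts (app X Y ts)

/-- A term is closed if it contains no variables. -/
def Closed (t : HTerm α) : Prop := t.varsList = []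

/-- The union `⋃ var(t)` of the variables of a term. -/
def varsUnion (t : HTerm α) : Finset α := t.varsList.foldr (· ∪ ·) ∅

mutual
  /-- Projection of a term to a decorated tree: every function symbol `(X, Y)` is sent to
  its first component `X`, and all variables are pruned. -/
  def toTree : HTerm α → FTree α
    | .var A => .node A []
    | .app X _ ts => .node X (toTreeList ts)
  def toTreeList : List (HTerm α) → List (FTree α)
    | [] => []
    | .var _ :: ts => toTreeList ts
    | t :: ts => toTree t :: toTreeList ts
end

end HTerm

/-- Well-formed terms over the signature `Σ_𝓗` associated with the hypergraph `H`:
a variable is a connected subset (its own sort); a function symbol `(X, Y)` (with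
`∅ ≠ X ⊆ Y ⊆ H` and `Y` connected) is applied to arguments whose sorts are exactly the
connected components of `𝓗_Y ∖ X`, listed by increasing maximal vertex. -/
inductive IsTerm {α : Type*} [LinearOrder α] (H : CLHypergraph α) : HTerm α → Prop
  | var (A : Finset α) : A ⊆ H.verts → (H.restrict A).Connected → IsTerm H (.var A)
  | app (X Y : Finset α) (ts : List (HTerm α)) :
      X.Nonempty → X ⊆ Y → Y ⊆ H.verts → (H.restrict Y).Connected →
      (∀ t ∈ ts, (H.restrict (Y \ X)).IsComponent t.sortOf) →
      (∀ C : Finset α, (H.restrict (Y \ X)).IsComponent C → ∃ t ∈ ts, t.sortOf = C) →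
      ts.Pairwise (fun a b => a.sortOf.max < b.sortOf.max) →
      (∀ t ∈ ts, IsTerm H t) →
      IsTerm H (.app X Y ts)


/-- The line-graph hypergraph of a simple graph `G`: its vertices are the edges of `G`,
its hyperedges are all singletons together with all pairs of distinct edges of `G`
sharing a common vertex. -/
def lineH {V : Type*} [Fintype V] [DecidableEq V] (G : SimpleGraph V)
    [DecidableRel G.Adj] : CLHypergraph (Sym2 V) where
  verts := G.edgeFinset
  edges := G.edgeFinset.image (fun e => {e}) ∪
    (((G.edgeFinset ×ˢ G.edgeFinset).filter
      (fun p => p.1 ≠ p.2 ∧ ∃ v : V, v ∈ p.1 ∧ v ∈ p.2)).image (fun p => {p.1, p.2}))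
  edges_nonempty := by
    intro e he
    rcases Finset.mem_union.mp he with h | h
    · rcases Finset.mem_image.mp h with ⟨a, _, rfl⟩
      exact ⟨a, Finset.mem_singleton_self a⟩
    · rcases Finset.mem_image.mp h with ⟨p, _, rfl⟩
      exact ⟨p.1, Finset.mem_insert_self _ _⟩
  edges_subset := by
    intro e he
    rcases Finset.mem_union.mp he with h | h
    · rcases Finset.mem_image.mp h with ⟨a, ha, rfl⟩
      exact Finset.singleton_subset_iff.mpr ha
    · rcases Finset.mem_image.mp h with ⟨p, hp, rfl⟩
      have hp' := Finset.mem_product.mp (Finset.mem_filter.mp hp).1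
      exact Finset.insert_subset_iff.mpr ⟨hp'.1, Finset.singleton_subset_iff.mpr hp'.2⟩
  atomic := fun v hv => Finset.mem_union_left _ (Finset.mem_image_of_mem _ hv)

namespace CLHypergraph
variable {α : Type*} [DecidableEq α]

/- ### new material -/

def Step (H : CLHypergraph α) (a b : α) : Prop := ∃ e ∈ H.edges, a ∈ e ∧ b ∈ e

def Reach (H : CLHypergraph α) : α → α → Prop := Relation.ReflTransGen H.Step

theorem Step.symm {H : CLHypergraph α} {a b : α} (h : H.Step a b) : H.Step b a := by
  obtain ⟨e, he, ha, hb⟩ := h; exact ⟨e, he, hb, ha⟩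

theorem step_symmetric (H : CLHypergraph α) : Symmetric H.Step := fun _ _ h => h.symm

theorem Reach.symm {H : CLHypergraph α} {a b : α} (h : H.Reach a b) : H.Reach b a :=
  (@Relation.ReflTransGen.symmetric _ _ ⟨fun _ _ h => H.step_symmetric h⟩).symm _ _ h

theorem Step.mem_left {H : CLHypergraph α} {a b : α} (h : H.Step a b) : a ∈ H.verts := by
  obtain ⟨e, he, ha, _⟩ := h; exact H.edges_subset e he ha

theorem Step.mem_right {H : CLHypergraph α} {a b : α} (h : H.Step a b) : b ∈ H.verts :=
  h.symm.mem_left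

theorem Reach.mem_right {H : CLHypergraph α} {a b : α} (ha : a ∈ H.verts) (h : H.Reach a b) :
    b ∈ H.verts := by
  induction h with
  | refl => exact ha
  | tail _ hstep ih => exact hstep.mem_right

theorem connected_of_reach {H : CLHypergraph α} (hne : H.verts.Nonempty)
    (h : ∀ a ∈ H.verts, ∀ b ∈ H.verts, H.Reach a b) : H.Connected := by
  refine ⟨hne, fun X₁ X₂ h₁ h₂ hd hu => ?_⟩
  obtain ⟨a, ha⟩ := h₁
  obtain ⟨b, hb⟩ := h₂
  have haV : a ∈ H.verts := hu ▸ Finset.mem_union_left _ ha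
  have hbV : b ∈ H.verts := hu ▸ Finset.mem_union_right _ hb
  have hr := h a haV b hbV
  clear hbV
  induction hr with
  | refl => exact absurd ha (Finset.disjoint_right.mp hd hb)
  | @tail c d hr hstep ih =>
    by_cases hc : c ∈ X₂
    · exact ih hc
    · have hcV : c ∈ H.verts := hstep.mem_left
      have hc1 : c ∈ X₁ := by
        have := hu ▸ hcV
        rcases Finset.mem_union.mp this with h' | h'
        · exact h'
        · exact absurd h' hc
      obtain ⟨e, he, hce, hde⟩ := hstep
      refine ⟨e, he, fun hsub => ?_, fun hsub => ?_⟩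
      · exact Finset.disjoint_left.mp hd (hsub hde) hb
      · exact hc (hsub hce)

theorem reach_of_connected {H : CLHypergraph α} (hc : H.Connected) :
    ∀ a ∈ H.verts, ∀ b ∈ H.verts, H.Reach a b := by
  intro a ha b hb
  by_contra hnr
  set X₁ := H.verts.filter (H.Reach a) with hX₁
  set X₂ := H.verts.filter (fun c => ¬ H.Reach a c) with hX₂
  have h₁ : X₁.Nonempty := ⟨a, Finset.mem_filter.mpr ⟨ha, Relation.ReflTransGen.refl⟩⟩
  have h₂ : X₂.Nonempty := ⟨b, Finset.mem_filter.mpr ⟨hb, hnr⟩⟩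
  have hd : Disjoint X₁ X₂ := by
    rw [Finset.disjoint_left]
    intro c hc1 hc2
    exact (Finset.mem_filter.mp hc2).2 (Finset.mem_filter.mp hc1).2
  have hu : X₁ ∪ X₂ = H.verts := Finset.filter_union_filter_not_eq _ _
  obtain ⟨e, he, hne1, hne2⟩ := hc.2 X₁ X₂ h₁ h₂ hd hu
  obtain ⟨c, hce, hc2⟩ := Finset.not_subset.mp hne2
  obtain ⟨d, hde, hd1⟩ := Finset.not_subset.mp hne1
  have hcV : c ∈ H.verts := H.edges_subset e he hce
  have hdV : d ∈ H.verts := H.edges_subset e he hde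
  have hc1 : c ∈ X₁ := by
    rcases Finset.mem_union.mp (hu ▸ hcV) with h' | h'
    · exact h'
    · exact absurd h' hc2
  have : H.Reach a d := ((Finset.mem_filter.mp hc1).2).tail ⟨e, he, hce, hde⟩
  exact hd1 (Finset.mem_filter.mpr ⟨hdV, this⟩)

theorem restrict_verts (H : CLHypergraph α) (X : Finset α) :
    (H.restrict X).verts = X ∩ H.verts := rfl

theorem restrict_mem_edges {H : CLHypergraph α} {X e : Finset α} :
    e ∈ (H.restrict X).edges ↔ e ∈ H.edges ∧ e ⊆ X := Finset.mem_filter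

theorem restrict_step_iff {H : CLHypergraph α} {X : Finset α} {a b : α} :
    (H.restrict X).Step a b ↔ ∃ e ∈ H.edges, e ⊆ X ∧ a ∈ e ∧ b ∈ e := by
  constructor
  · rintro ⟨e, he, ha, hb⟩
    rcases restrict_mem_edges.mp he with ⟨h1, h2⟩
    exact ⟨e, h1, h2, ha, hb⟩
  · rintro ⟨e, he, hs, ha, hb⟩
    exact ⟨e, restrict_mem_edges.mpr ⟨he, hs⟩, ha, hb⟩

theorem sameComponent_iff {H : CLHypergraph α} {y z : α} :
    H.SameComponent y z ↔ y ∈ H.verts ∧ z ∈ H.verts ∧ H.Reach y z := by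
  constructor
  · rintro ⟨C, ⟨hCsub, hCconn, _⟩, hy, hz⟩
    refine ⟨hCsub hy, hCsub hz, ?_⟩
    have hy' : y ∈ (H.restrict C).verts := Finset.mem_inter.mpr ⟨hy, hCsub hy⟩
    have hz' : z ∈ (H.restrict C).verts := Finset.mem_inter.mpr ⟨hz, hCsub hz⟩
    exact Relation.ReflTransGen.mono
      (fun a b hab => by
        rcases restrict_step_iff.mp hab with ⟨e, he, _, ha, hb⟩
        exact ⟨e, he, ha, hb⟩) _ _ (reach_of_connected hCconn y hy' z hz')
  · rintro ⟨hy, hz, hr⟩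
    set C := H.verts.filter (H.Reach y) with hC
    have hCsub : C ⊆ H.verts := Finset.filter_subset _ _
    have hmemC : ∀ c, H.Reach y c → c ∈ C := fun c h =>
      Finset.mem_filter.mpr ⟨h.mem_right hy, h⟩
    have hedge : ∀ c ∈ C, ∀ e ∈ H.edges, c ∈ e → e ⊆ C := by
      intro c hc e he hce w hw
      exact hmemC w ((Finset.mem_filter.mp hc).2.tail ⟨e, he, hce, hw⟩)
    have hreachC : ∀ c, H.Reach y c → (H.restrict C).Reach y c := by
      intro c h
      induction h with
      | refl => exact Relation.ReflTransGen.refl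
      | @tail c d hr hstep ih =>
        obtain ⟨e, he, hce, hde⟩ := hstep
        exact ih.tail (restrict_step_iff.mpr
          ⟨e, he, hedge c (hmemC c hr) e he hce, hce, hde⟩)
    have hCverts : (H.restrict C).verts = C := by
      rw [restrict_verts, Finset.inter_eq_left.mpr hCsub]
    have hconn : (H.restrict C).Connected := by
      apply connected_of_reach
      · rw [hCverts]; exact ⟨y, hmemC y Relation.ReflTransGen.refl⟩
      · intro a haC b hbC
        rw [hCverts] at haC hbC
        have h1 : (H.restrict C).Reach y a := hreachC a (Finset.mem_filter.mp haC).2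
        have h2 : (H.restrict C).Reach y b := hreachC b (Finset.mem_filter.mp hbC).2
        exact ((@Relation.ReflTransGen.symmetric _ _ ⟨fun _ _ h => (H.restrict C).step_symmetric h⟩).symm _ _ h1).trans h2
    refine ⟨C, ⟨hCsub, hconn, ?_⟩, hmemC y Relation.ReflTransGen.refl, hmemC z hr⟩
    intro D hCD hDsub hDconn
    refine Finset.Subset.antisymm (fun d hd => ?_) hCD
    have hyD : y ∈ (H.restrict D).verts :=
      Finset.mem_inter.mpr ⟨hCD (hmemC y Relation.ReflTransGen.refl), hy⟩
    have hdD : d ∈ (H.restrict D).verts := Finset.mem_inter.mpr ⟨hd, hDsub hd⟩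
    have := reach_of_connected hDconn y hyD d hdD
    exact hmemC d (Relation.ReflTransGen.mono (fun a b hab => by
      rcases restrict_step_iff.mp hab with ⟨e, he, _, ha, hb⟩
      exact ⟨e, he, ha, hb⟩) _ _ this)

theorem rtg_congr {β : Type*} {r s : β → β → Prop} (h : ∀ a b, r a b ↔ s a b) {a b : β} :
    Relation.ReflTransGen r a b ↔ Relation.ReflTransGen s a b :=
  ⟨Relation.ReflTransGen.mono (fun a b => (h a b).mp) a b,
   Relation.ReflTransGen.mono (fun a b => (h a b).mpr) a b⟩


end CLHypergraph

open CLHypergraph (rtg_congr)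

section LineTree

variable {V : Type*} [Fintype V] [DecidableEq V] (G : SimpleGraph V) [DecidableRel G.Adj]

theorem lineH_edges_char {e : Finset (Sym2 V)} (he : e ∈ (lineH G).edges) :
    ∃ a b, a ∈ G.edgeFinset ∧ b ∈ G.edgeFinset ∧ e = {a, b} ∧ ∃ w, w ∈ a ∧ w ∈ b := by
  rcases Finset.mem_union.mp he with h | h
  · rcases Finset.mem_image.mp h with ⟨a, ha, rfl⟩
    exact ⟨a, a, ha, ha, by simp, a.out.1, Sym2.out_fst_mem a, Sym2.out_fst_mem a⟩
  · rcases Finset.mem_image.mp h with ⟨p, hp, rfl⟩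
    rcases Finset.mem_filter.mp hp with ⟨hp1, _, w, hw1, hw2⟩
    have h2 := Finset.mem_product.mp hp1
    exact ⟨p.1, p.2, h2.1, h2.2, rfl, w, hw1, hw2⟩

theorem pair_mem_lineH_edges {a b : Sym2 V} (ha : a ∈ G.edgeFinset) (hb : b ∈ G.edgeFinset)
    (hw : ∃ w, w ∈ a ∧ w ∈ b) : ({a, b} : Finset (Sym2 V)) ∈ (lineH G).edges := by
  by_cases hab : a = b
  · subst hab
    have : ({a, a} : Finset (Sym2 V)) = {a} := by simp
    rw [this]
    exact Finset.mem_union_left _ (Finset.mem_image_of_mem _ ha)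
  · refine Finset.mem_union_right _ (Finset.mem_image.mpr ⟨(a, b), ?_, rfl⟩)
    exact Finset.mem_filter.mpr ⟨Finset.mem_product.mpr ⟨ha, hb⟩, hab, hw⟩

/-- One step of edge-adjacency within a set `S` of edges of `G`. -/
def EStep (S : Finset (Sym2 V)) (a b : Sym2 V) : Prop :=
  a ∈ S ∧ b ∈ S ∧ a ∈ G.edgeFinset ∧ b ∈ G.edgeFinset ∧ ∃ w, w ∈ a ∧ w ∈ b

/-- Edge-connectivity within a set `S` of edges of `G`. -/
def EReach (S : Finset (Sym2 V)) : Sym2 V → Sym2 V → Prop :=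
  Relation.ReflTransGen (EStep G S)

theorem estep_symm {S : Finset (Sym2 V)} {a b : Sym2 V} (h : EStep G S a b) : EStep G S b a := by
  obtain ⟨h1, h2, h3, h4, w, hw1, hw2⟩ := h
  exact ⟨h2, h1, h4, h3, w, hw2, hw1⟩

theorem ereach_symm {S : Finset (Sym2 V)} {a b : Sym2 V} (h : EReach G S a b) :
    EReach G S b a :=
  (@Relation.ReflTransGen.symmetric _ _ ⟨fun _ _ h => estep_symm G h⟩).symm _ _ h

theorem ereach_mono {S T : Finset (Sym2 V)} (hST : S ⊆ T) {a b : Sym2 V}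
    (h : EReach G S a b) : EReach G T a b :=
  Relation.ReflTransGen.mono (fun _ _ ⟨h1, h2, h3, h4, hw⟩ => ⟨hST h1, hST h2, h3, h4, hw⟩) _ _ h

theorem ereach_char {S : Finset (Sym2 V)} (hS : S ⊆ G.edgeFinset) {a b : Sym2 V} :
    Relation.ReflTransGen (fun a b => ∃ e ∈ (lineH G).edges, e ⊆ S ∧ a ∈ e ∧ b ∈ e) a b ↔
      EReach G S a b := by
  refine rtg_congr fun a b => ⟨?_, ?_⟩
  · rintro ⟨e, he, hsub, ham, hbm⟩
    obtain ⟨c, d, hc, hd, rfl, w, hw1, hw2⟩ := lineH_edges_char G he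
    refine ⟨hsub ham, hsub hbm, hS (hsub ham), hS (hsub hbm), ?_⟩
    rcases Finset.mem_insert.mp ham with rfl | ham' <;>
      rcases Finset.mem_insert.mp hbm with rfl | hbm'
    · exact ⟨w, hw1, hw1⟩
    · exact ⟨w, hw1, (Finset.mem_singleton.mp hbm') ▸ hw2⟩
    · exact ⟨w, (Finset.mem_singleton.mp ham') ▸ hw2, hw1⟩
    · exact ⟨w, (Finset.mem_singleton.mp ham') ▸ hw2, (Finset.mem_singleton.mp hbm') ▸ hw2⟩
  · rintro ⟨haS, hbS, ha, hb, hw⟩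
    exact ⟨{a, b}, pair_mem_lineH_edges G ha hb hw,
      Finset.insert_subset_iff.mpr ⟨haS, Finset.singleton_subset_iff.mpr hbS⟩,
      Finset.mem_insert_self _ _, Finset.mem_insert_of_mem (Finset.mem_singleton_self _)⟩

theorem estep_of_shared {S : Finset (Sym2 V)} {a b : Sym2 V} (haS : a ∈ S) (hbS : b ∈ S)
    (ha : a ∈ G.edgeFinset) (hb : b ∈ G.edgeFinset) (hw : ∃ w, w ∈ a ∧ w ∈ b) :
    EStep G S a b := ⟨haS, hbS, ha, hb, hw⟩

theorem restrict_reach_iff {Y : Finset (Sym2 V)} (hY : Y ⊆ G.edgeFinset) {a b : Sym2 V} :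
    ((lineH G).restrict Y).Reach a b ↔ EReach G Y a b :=
  (rtg_congr fun _ _ => CLHypergraph.restrict_step_iff).trans (ereach_char G hY)

theorem lineH_links_iff {x y z : Sym2 V} :
    (lineH G).Links x y z ↔ y ∈ G.edgeFinset \ {x} ∧ z ∈ G.edgeFinset \ {x} ∧
      EReach G (G.edgeFinset \ {x}) y z := by
  have hsub : G.edgeFinset \ {x} ⊆ G.edgeFinset := Finset.sdiff_subset
  unfold CLHypergraph.Links
  rw [CLHypergraph.sameComponent_iff]
  have hv : ((lineH G).restrict ((lineH G).verts \ {x})).verts = G.edgeFinset \ {x} := by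
    show (G.edgeFinset \ {x}) ∩ G.edgeFinset = _
    exact Finset.inter_eq_left.mpr hsub
  rw [hv]
  exact and_congr_right fun _ => and_congr_right fun _ => restrict_reach_iff G hsub

theorem lineH_restrict_links_iff {Y : Finset (Sym2 V)} (hY : Y ⊆ G.edgeFinset) {x y z : Sym2 V} :
    ((lineH G).restrict Y).Links x y z ↔ y ∈ Y \ {x} ∧ z ∈ Y \ {x} ∧
      EReach G (Y \ {x}) y z := by
  have hYv : ((lineH G).restrict Y).verts = Y := by
    show Y ∩ G.edgeFinset = Y
    exact Finset.inter_eq_left.mpr hY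
  have hsub : Y \ {x} ⊆ G.edgeFinset := Finset.sdiff_subset.trans hY
  unfold CLHypergraph.Links
  rw [CLHypergraph.sameComponent_iff, hYv]
  have hv2 : (((lineH G).restrict Y).restrict (Y \ {x})).verts = Y \ {x} := by
    show (Y \ {x}) ∩ (Y ∩ G.edgeFinset) = Y \ {x}
    rw [Finset.inter_eq_left.mpr hY]
    exact Finset.inter_eq_left.mpr Finset.sdiff_subset
  rw [hv2]
  refine and_congr_right fun _ => and_congr_right fun _ => ?_
  refine (rtg_congr fun a b => ?_).trans (ereach_char G hsub)
  rw [CLHypergraph.restrict_step_iff]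
  constructor
  · rintro ⟨e, he, hs, ha, hb⟩
    exact ⟨e, (CLHypergraph.restrict_mem_edges.mp he).1, hs, ha, hb⟩
  · rintro ⟨e, he, hs, ha, hb⟩
    exact ⟨e, CLHypergraph.restrict_mem_edges.mpr ⟨he, hs.trans Finset.sdiff_subset⟩, hs, ha, hb⟩

theorem reach_of_walk : ∀ {w1 w2 : V} (_ : G.Walk w1 w2) {a b : Sym2 V},
    a ∈ G.edgeFinset → b ∈ G.edgeFinset → w1 ∈ a → w2 ∈ b → (lineH G).Reach a b := by
  intro w1 w2 p
  induction p with
  | nil =>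
    intro a b ha hb h1 h2
    refine Relation.ReflTransGen.single ⟨{a, b}, pair_mem_lineH_edges G ha hb ?_,
      Finset.mem_insert_self _ _, Finset.mem_insert_of_mem (Finset.mem_singleton_self _)⟩
    rename_i w
    exact ⟨w, h1, h2⟩
  | @cons w1 c w2 h q ih =>
    intro a b ha hb h1 h2
    have he1 : s(w1, c) ∈ G.edgeFinset := SimpleGraph.mem_edgeFinset.mpr h
    refine Relation.ReflTransGen.head ⟨{a, s(w1, c)}, pair_mem_lineH_edges G ha he1
      ⟨w1, h1, Sym2.mem_mk_left _ _⟩, Finset.mem_insert_self _ _,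
      Finset.mem_insert_of_mem (Finset.mem_singleton_self _)⟩
      (ih he1 hb (Sym2.mem_mk_right _ _) h2)

theorem lineH_connected (hpre : G.Preconnected) (hE : G.edgeFinset.Nonempty) :
    (lineH G).Connected := by
  apply CLHypergraph.connected_of_reach hE
  intro a ha b hb
  obtain ⟨p⟩ := hpre a.out.1 b.out.1
  exact reach_of_walk G p ha hb (Sym2.out_fst_mem a) (Sym2.out_fst_mem b)

end LineTree

section TreeKey

open SimpleGraph

variable {V : Type*} [Fintype V] [DecidableEq V] (G : SimpleGraph V) [DecidableRel G.Adj]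

set_option linter.unusedSectionVars false

theorem tree_key (hG : G.IsTree) {Y : Finset (Sym2 V)} (hYsub : Y ⊆ G.edgeFinset)
    (hYconn : ∀ a ∈ Y, ∀ b ∈ Y, EReach G Y a b) {x y z : Sym2 V}
    (hx : x ∈ Y) (hy : y ∈ Y) (hz : z ∈ Y) (hyx : y ≠ x) (hzx : z ≠ x)
    (h : EReach G (G.edgeFinset \ {x}) y z) : EReach G (Y \ {x}) y z := by
  obtain ⟨⟨u, v⟩, rfl⟩ := Quot.exists_rep x
  have hxe : s(u, v) ∈ G.edgeFinset := hYsub hx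
  have hadj : G.Adj u v := (SimpleGraph.mem_edgeSet G).mp (SimpleGraph.mem_edgeFinset.mp hxe)
  set G' := G \ SimpleGraph.fromEdgeSet {s(u, v)} with hG'def
  have hG'adj : ∀ a b : V, G'.Adj a b ↔ G.Adj a b ∧ s(a, b) ≠ s(u, v) := by
    intro a b
    rw [hG'def, SimpleGraph.sdiff_adj, SimpleGraph.fromEdgeSet_adj]
    constructor
    · rintro ⟨h1, h2⟩
      exact ⟨h1, fun hc => h2 ⟨Set.mem_singleton_iff.mpr hc, h1.ne⟩⟩
    · rintro ⟨h1, h2⟩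
      exact ⟨h1, fun hc => h2 (Set.mem_singleton_iff.mp hc.1)⟩
  have hbridge : ¬ G'.Reachable u v := by
    have hb := (SimpleGraph.isAcyclic_iff_forall_edge_isBridge.mp hG.2)
      (show s(u, v) ∈ G.edgeSet from hadj)
    exact SimpleGraph.isBridge_iff.mp hb
  -- every vertex reaches u or v in G'
  have C1 : ∀ {a b : V} (_ : G.Walk a b),
      (G'.Reachable a u ∨ G'.Reachable a v) ∨ G'.Reachable a b := by
    intro a b p
    induction p with
    | nil => exact Or.inr (SimpleGraph.Reachable.refl _)
    | @cons a c _ hac q ih =>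
      by_cases hxx : s(a, c) = s(u, v)
      · rcases Sym2.eq_iff.mp hxx with ⟨rfl, rfl⟩ | ⟨rfl, rfl⟩
        · exact Or.inl (Or.inl (SimpleGraph.Reachable.refl _))
        · exact Or.inl (Or.inr (SimpleGraph.Reachable.refl _))
      · have hadj' : G'.Adj a c := (hG'adj a c).mpr ⟨hac, hxx⟩
        refine ih.imp (fun h' => h'.imp hadj'.reachable.trans hadj'.reachable.trans)
          hadj'.reachable.trans
  have F1 : ∀ w : V, G'.Reachable w u ∨ G'.Reachable w v := by
    intro w
    obtain ⟨p⟩ := hG.1.preconnected w u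
    rcases C1 p with h' | h'
    · exact h'
    · exact Or.inl h'
  -- side equivalence along an edge
  have equi : ∀ e ∈ G.edgeFinset, e ≠ s(u, v) → ∀ w ∈ e, ∀ t : V,
      ((∃ w', w' ∈ e ∧ G'.Reachable w' t) ↔ G'.Reachable w t) := by
    intro e he hex w hw t
    constructor
    · rintro ⟨w', hw', hr⟩
      by_cases hww : w = w'
      · exact hww ▸ hr
      · have hee : e = s(w, w') := ((Sym2.mem_and_mem_iff hww).mp ⟨hw, hw'⟩)
        have hadj2 : G.Adj w w' := (SimpleGraph.mem_edgeSet G).mp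
          (by rw [← hee]; exact SimpleGraph.mem_edgeFinset.mp he)
        have : G'.Adj w w' := (hG'adj w w').mpr ⟨hadj2, by rw [← hee]; exact hex⟩
        exact this.reachable.trans hr
    · intro hr
      exact ⟨w, hw, hr⟩
  set SU : Sym2 V → Prop := fun e => ∃ w, w ∈ e ∧ G'.Reachable w u with hSUdef
  -- an edge ≠ x cannot be on both sides
  have not_both : ∀ e ∈ G.edgeFinset, e ≠ s(u, v) → SU e →
      ¬ ∃ w, w ∈ e ∧ G'.Reachable w v := by
    rintro e he hex ⟨w, hw, hru⟩ ⟨w', hw', hrv⟩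
    have h1 : G'.Reachable w u := hru
    have h2 : G'.Reachable w v := (equi e he hex w hw v).mp ⟨w', hw', hrv⟩
    exact hbridge (h1.symm.trans h2)
  -- EReach among non-x edges preserves the side
  have side_pres : ∀ {S : Finset (Sym2 V)}, S ⊆ G.edgeFinset \ {s(u, v)} →
      ∀ {a b : Sym2 V}, EReach G S a b → (SU a ↔ SU b) := by
    intro S hS a b hr
    induction hr with
    | refl => exact Iff.rfl
    | @tail c d hr hstep ih =>
      refine ih.trans ?_
      obtain ⟨hcS, hdS, hce, hde, w, hwc, hwd⟩ := hstep
      have hcx : c ≠ s(u, v) := by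
        have := hS hcS; simp only [Finset.mem_sdiff, Finset.mem_singleton] at this
        exact this.2
      have hdx : d ≠ s(u, v) := by
        have := hS hdS; simp only [Finset.mem_sdiff, Finset.mem_singleton] at this
        exact this.2
      exact (equi c hce hcx w hwc u).trans (equi d hde hdx w hwd u).symm
  -- portal: from any non-x edge of Y, one can reach inside Y \ {x} an edge touching x
  have portal : ∀ (l : List (Sym2 V)) (a : Sym2 V), a ∈ Y → a ≠ s(u, v) →
      List.Chain (EStep G Y) a l → (a :: l).getLast (List.cons_ne_nil a l) = s(u, v) →
      ∃ p, p ∈ Y ∧ p ≠ s(u, v) ∧ EReach G (Y \ {s(u, v)}) a p ∧ ∃ w, w ∈ p ∧ w ∈ s(u, v) := by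
    intro l
    induction l with
    | nil =>
      intro a ha hax _ hl
      simp only [List.getLast_singleton] at hl
      exact absurd hl hax
    | cons b l ih =>
      intro a ha hax hch hl
      rcases List.chain_cons.mp hch with ⟨hab, hch'⟩
      obtain ⟨haY, hbY, hae, hbe, w, hwa, hwb⟩ := hab
      by_cases hbx : b = s(u, v)
      · exact ⟨a, ha, hax, Relation.ReflTransGen.refl, w, hwa, hbx ▸ hwb⟩
      · have hl' : (b :: l).getLast (List.cons_ne_nil b l) = s(u, v) := by
          rw [List.getLast_cons (List.cons_ne_nil b l)] at hl
          exact hl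
        obtain ⟨p, hp1, hp2, hp3, hp4⟩ := ih b hbY hbx hch' hl'
        refine ⟨p, hp1, hp2, Relation.ReflTransGen.head ?_ hp3, hp4⟩
        exact ⟨Finset.mem_sdiff.mpr ⟨ha, by simpa using hax⟩,
          Finset.mem_sdiff.mpr ⟨hbY, by simpa using hbx⟩, hae, hbe, w, hwa, hwb⟩
  -- apply the portal lemma to y and z
  have get_portal : ∀ a ∈ Y, a ≠ s(u, v) →
      ∃ p, p ∈ Y ∧ p ≠ s(u, v) ∧ EReach G (Y \ {s(u, v)}) a p ∧ ∃ w, w ∈ p ∧ w ∈ s(u, v) := by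
    intro a ha hax
    obtain ⟨l, hch, hl⟩ := List.exists_isChain_cons_of_relationReflTransGen (hYconn a ha _ hx)
    exact portal l a ha hax hch hl
  obtain ⟨p, hpY, hpx, hyp, wp, hwp, hwpx⟩ := get_portal y hy hyx
  obtain ⟨q, hqY, hqx, hzq, wq, hwq, hwqx⟩ := get_portal z hz hzx
  have hsubY : Y \ {s(u, v)} ⊆ G.edgeFinset \ {s(u, v)} :=
    Finset.sdiff_subset_sdiff hYsub (le_refl _)
  -- side bookkeeping
  have hyps : SU y ↔ SU p := side_pres hsubY hyp
  have hzqs : SU z ↔ SU q := side_pres hsubY hzq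
  have hyzs : SU y ↔ SU z := side_pres (le_refl _) h
  have hpe : p ∈ G.edgeFinset := hYsub hpY
  have hqe : q ∈ G.edgeFinset := hYsub hqY
  -- the shared endpoint of p (resp. q) with x is u or v as dictated by side
  have pick : ∀ e ∈ G.edgeFinset, e ≠ s(u, v) → ∀ w', w' ∈ e → w' ∈ s(u, v) →
      (SU e → u ∈ e) ∧ (¬ SU e → v ∈ e) := by
    intro e he hex w' hw' hwx'
    rcases Sym2.mem_iff.mp hwx' with rfl | rfl
    · refine ⟨fun _ => hw', fun hn => absurd ?_ hn⟩
      exact ⟨w', hw', SimpleGraph.Reachable.refl _⟩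
    · constructor
      · intro hsu
        exact absurd ⟨w', hw', SimpleGraph.Reachable.refl _⟩ (not_both e he hex hsu)
      · intro _
        exact hw'
  have hpick_p := pick p hpe hpx wp hwp hwpx
  have hpick_q := pick q hqe hqx wq hwq hwqx
  have hshared : ∃ c, c ∈ p ∧ c ∈ q := by
    by_cases hsy : SU y
    · exact ⟨u, hpick_p.1 (hyps.mp hsy), hpick_q.1 (hzqs.mp (hyzs.mp hsy))⟩
    · exact ⟨v, hpick_p.2 fun hc => hsy (hyps.mpr hc),
        hpick_q.2 fun hc => hsy (hyzs.mpr (hzqs.mpr hc))⟩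
  -- assemble
  refine hyp.trans (Relation.ReflTransGen.head ?_ (ereach_symm G hzq))
  exact ⟨Finset.mem_sdiff.mpr ⟨hpY, by simpa using hpx⟩,
    Finset.mem_sdiff.mpr ⟨hqY, by simpa using hqx⟩, hpe, hqe, hshared⟩

end TreeKey


/-- Theorem `thm:examples` (e).  For every finite tree `𝒯` with at
least one edge, the line-graph hypergraph of `𝒯` (underlying the operahedron of `𝒯`) is a
connected contextual hypergraph. -/
theorem stmt19 {V : Type*} [Fintype V] [DecidableEq V] (G : SimpleGraph V)
    [DecidableRel G.Adj] (hG : G.IsTree) (hE : G.edgeFinset.Nonempty) :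
    (lineH G).Connected ∧ (lineH G).Contextual := by
  refine ⟨lineH_connected G hG.1.preconnected hE, ?_⟩
  intro Y hYsub hYconn _hcard x y z hxY hyY hzY hxy _hyz hxz
  have hYsub' : Y ⊆ G.edgeFinset := hYsub
  have hYreach : ∀ a ∈ Y, ∀ b ∈ Y, EReach G Y a b := by
    intro a ha b hb
    have ha' : a ∈ ((lineH G).restrict Y).verts :=
      Finset.mem_inter.mpr ⟨ha, hYsub' ha⟩
    have hb' : b ∈ ((lineH G).restrict Y).verts :=
      Finset.mem_inter.mpr ⟨hb, hYsub' hb⟩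
    exact (restrict_reach_iff G hYsub').mp
      (CLHypergraph.reach_of_connected hYconn a ha' b hb')
  rw [lineH_restrict_links_iff G hYsub', lineH_links_iff G]
  constructor
  · rintro ⟨hy, hz, hr⟩
    refine ⟨Finset.mem_sdiff.mpr ⟨hYsub' hyY, (Finset.mem_sdiff.mp hy).2⟩,
      Finset.mem_sdiff.mpr ⟨hYsub' hzY, (Finset.mem_sdiff.mp hz).2⟩, ?_⟩
    exact ereach_mono G (Finset.sdiff_subset_sdiff hYsub' (le_refl _)) hr
  · rintro ⟨hy, hz, hr⟩
    have hyx : y ≠ x := fun hc => hxy hc.symm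
    have hzx : z ≠ x := fun hc => hxz hc.symm
    refine ⟨Finset.mem_sdiff.mpr ⟨hyY, by simpa using hyx⟩,
      Finset.mem_sdiff.mpr ⟨hzY, by simpa using hzx⟩, ?_⟩
    exact tree_key G hG hYsub' hYreach hxY hyY hzY hyx hzx hr


end
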